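/- An outerplanar graph on at least 3 vertices is 2-connected if and only if it is Hamiltonian; that is, the 2-connected outerplanar graphs are precisely the Hamiltonian outerplanar graphs. -/

import Mathlib

namespace FOG

/-- First-order formulas over the vocabulary of (colored) graphs:
equality, adjacency `E`, and unary color predicates `C_i`.
Variables are indexed by natural numbers. -/
inductive Fml : Type
  | eq : ℕ → ℕ → Fml
  | adj : ℕ → ℕ → Fml
  | col : ℕ → ℕ → Fml
  | not : Fml → Fml
  | and : Fml → Fml → Fml
  | or : Fml → Fml → Fml
  | ex : ℕ → Fml → Fml
  | all : ℕ → Fml → Fml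

namespace Fml

/-- Free variables of a formula. -/
def freeVars : Fml → Finset ℕ
  | eq i j => {i, j}
  | adj i j => {i, j}
  | col _ i => {i}
  | not φ => φ.freeVars
  | and φ ψ => φ.freeVars ∪ ψ.freeVars
  | or φ ψ => φ.freeVars ∪ ψ.freeVars
  | ex x φ => φ.freeVars.erase x
  | all x φ => φ.freeVars.erase x

/-- Quantifier rank: maximum depth of nesting of quantifiers. -/
def qr : Fml → ℕ
  | eq _ _ => 0
  | adj _ _ => 0
  | col _ _ => 0
  | not φ => φ.qr
  | and φ ψ => max φ.qr ψ.qr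
  | or φ ψ => max φ.qr ψ.qr
  | ex _ φ => φ.qr + 1
  | all _ φ => φ.qr + 1

/-- The formula uses only the vocabulary `{E, =}` (no color predicates). -/
def noColors : Fml → Prop
  | eq _ _ => True
  | adj _ _ => True
  | col _ _ => False
  | not φ => φ.noColors
  | and φ ψ => φ.noColors ∧ ψ.noColors
  | or φ ψ => φ.noColors ∧ ψ.noColors
  | ex _ φ => φ.noColors
  | all _ φ => φ.noColors

/-- The set (here: list, with possible repetitions) of sequences of nested quantifiers,
`true` standing for `∃` and `false` for `∀`. -/
def nest : Fml → List (List Bool)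
  | eq _ _ => [[]]
  | adj _ _ => [[]]
  | col _ _ => [[]]
  | not φ => φ.nest.map (List.map Bool.not)
  | and φ ψ => φ.nest ++ ψ.nest
  | or φ ψ => φ.nest ++ ψ.nest
  | ex _ φ => φ.nest.map (List.cons true)
  | all _ φ => φ.nest.map (List.cons false)

/-- Number of alternations (occurrences of `∃∀` or `∀∃`) in a sequence of quantifiers. -/
def altCount : List Bool → ℕ
  | [] => 0
  | [_] => 0
  | a :: b :: l => (if a = b then 0 else 1) + altCount (b :: l)

/-- The alternation number of a formula. -/
def altNum (φ : Fml) : ℕ := (φ.nest.map altCount).foldr max 0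

/-- A sentence is a formula with no free variables. -/
def IsSentence (φ : Fml) : Prop := φ.freeVars = ∅

/-- Satisfaction of a formula in a graph `G` with coloring `c` under assignment `ρ`. -/
def Sat {V : Type*} (G : SimpleGraph V) (c : ℕ → V → Prop) (ρ : ℕ → V) : Fml → Prop
  | eq i j => ρ i = ρ j
  | adj i j => G.Adj (ρ i) (ρ j)
  | col k i => c k (ρ i)
  | not φ => ¬ Sat G c ρ φ
  | and φ ψ => Sat G c ρ φ ∧ Sat G c ρ ψ
  | or φ ψ => Sat G c ρ φ ∨ Sat G c ρ ψ
  | ex x φ => ∃ v : V, Sat G c (Function.update ρ x v) φ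
  | all x φ => ∀ v : V, Sat G c (Function.update ρ x v) φ

/-- A formula is true on `(G, c)` if it is satisfied under every assignment. -/
def TrueOn {V : Type*} (G : SimpleGraph V) (c : ℕ → V → Prop) (φ : Fml) : Prop :=
  ∀ ρ : ℕ → V, φ.Sat G c ρ

/-- A formula is false on `(G, c)` if it is satisfied under no assignment. -/
def FalseOn {V : Type*} (G : SimpleGraph V) (c : ℕ → V → Prop) (φ : Fml) : Prop :=
  ∀ ρ : ℕ → V, ¬ φ.Sat G c ρ

end Fml

/-- The trivial (empty) coloring, used to regard plain graphs as colored structures. -/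
def noColoring {V : Type*} : ℕ → V → Prop := fun _ _ => False

/-- A sentence `φ` over `{E, =}` defines the (finite, nonempty) graph `G`:
it is true on `G` and false on every finite graph non-isomorphic to `G`. -/
def Defines {V : Type} (G : SimpleGraph V) (φ : Fml) : Prop :=
  φ.IsSentence ∧ φ.noColors ∧ φ.TrueOn G noColoring ∧
    ∀ (W : Type) [Finite W] [Nonempty W] (H : SimpleGraph W),
      ¬ Nonempty (G ≃g H) → φ.FalseOn H noColoring

/-- `D(G,G')`: minimum quantifier rank of a sentence over `{E, =}` true on `G`
and false on `G'`. -/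
noncomputable def distRank {V W : Type} (G : SimpleGraph V) (H : SimpleGraph W) : ℕ :=
  sInf {r | ∃ φ : Fml, φ.IsSentence ∧ φ.noColors ∧ φ.TrueOn G noColoring ∧
    φ.FalseOn H noColoring ∧ φ.qr = r}

/-- `D^k(G,G')`: as `distRank`, restricted to sentences of alternation number `≤ k`. -/
noncomputable def distRankAlt (k : ℕ) {V W : Type} (G : SimpleGraph V) (H : SimpleGraph W) : ℕ :=
  sInf {r | ∃ φ : Fml, φ.IsSentence ∧ φ.noColors ∧ φ.altNum ≤ k ∧ φ.TrueOn G noColoring ∧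
    φ.FalseOn H noColoring ∧ φ.qr = r}

/-- `D(G)`: minimum quantifier rank of a sentence defining `G`. -/
noncomputable def defRank {V : Type} (G : SimpleGraph V) : ℕ :=
  sInf {r | ∃ φ : Fml, Defines G φ ∧ φ.qr = r}

/-- `D^k(G)`: as `defRank`, restricted to sentences of alternation number `≤ k`. -/
noncomputable def defRankAlt (k : ℕ) {V : Type} (G : SimpleGraph V) : ℕ :=
  sInf {r | ∃ φ : Fml, Defines G φ ∧ φ.altNum ≤ k ∧ φ.qr = r}

/-- A colored graph: a simple graph with unary color predicates, only finitely many
of which are nonempty. -/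
structure ColoredGraph (V : Type*) where
  graph : SimpleGraph V
  color : ℕ → V → Prop
  finColors : {i : ℕ | ∃ v, color i v}.Finite

/-- Isomorphism of colored graphs: a graph isomorphism preserving all colors. -/
def CIso {V W : Type*} (A : ColoredGraph V) (B : ColoredGraph W) : Prop :=
  ∃ f : A.graph ≃g B.graph, ∀ i v, A.color i v ↔ B.color i (f v)

/-- `F` is an `X`-flap of `G`: the vertex set of a connected component of `G - X`. -/
def IsFlap {V : Type*} (G : SimpleGraph V) (X : Set V) (F : Set V) : Prop :=
  ∃ C : (G.induce (Xᶜ : Set V)).ConnectedComponent, F = Subtype.val '' C.supp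

/-- Two `X`-flaps are similar if the identity of `X` extends to an isomorphism
of the induced subgraphs `G[X ∪ F₁]` and `G[X ∪ F₂]`. -/
def SimilarFlaps {V : Type*} (G : SimpleGraph V) (X F₁ F₂ : Set V) : Prop :=
  ∃ f : G.induce (X ∪ F₁) ≃g G.induce (X ∪ F₂),
    ∀ (x : V) (hx : x ∈ X), ((f ⟨x, Or.inl hx⟩ : ↥(X ∪ F₂)) : V) = x

/-- `H` is a minor of `G` (via branch sets). -/
def HasMinor {V W : Type*} (G : SimpleGraph V) (H : SimpleGraph W) : Prop :=
  ∃ B : W → Set V,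
    (∀ w, (B w).Nonempty) ∧
    (∀ w, (G.induce (B w)).Connected) ∧
    (Pairwise fun w₁ w₂ => Disjoint (B w₁) (B w₂)) ∧
    (∀ w₁ w₂, H.Adj w₁ w₂ → ∃ u ∈ B w₁, ∃ v ∈ B w₂, G.Adj u v)

/-- Planarity, via Wagner's characterization: no `K₅` and no `K₃,₃` minor. -/
def Planar {V : Type*} (G : SimpleGraph V) : Prop :=
  ¬ HasMinor G (⊤ : SimpleGraph (Fin 5)) ∧
  ¬ HasMinor G (completeBipartiteGraph (Fin 3) (Fin 3))

/-- Outerplanarity, via the minor characterization: no `K₄` and no `K₂,₃` minor. -/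
def Outerplanar {V : Type*} (G : SimpleGraph V) : Prop :=
  ¬ HasMinor G (⊤ : SimpleGraph (Fin 4)) ∧
  ¬ HasMinor G (completeBipartiteGraph (Fin 2) (Fin 3))

/-- A graph is Hamiltonian if it has a cycle passing through all its vertices. -/
def IsHam {V : Type*} (G : SimpleGraph V) : Prop :=
  ∃ (a : V) (p : G.Walk a a), p.IsCycle ∧ ∀ v : V, v ∈ p.support

/-- The smallest `h` such that `G` has no `K_h` minor. -/
noncomputable def hadwiger {V : Type*} (G : SimpleGraph V) : ℕ :=
  sInf {h : ℕ | ¬ HasMinor G (⊤ : SimpleGraph (Fin h))}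

/-- A rotation system on `G`: a permutation of the darts fixing tails, whose
restriction to the darts at each vertex is a single cycle. -/
structure RotationSystem {V : Type*} (G : SimpleGraph V) where
  σ : Equiv.Perm G.Dart
  fst_fixed : ∀ d : G.Dart, (σ d).toProd.1 = d.toProd.1
  vert_cycle : ∀ d d' : G.Dart, d.toProd.1 = d'.toProd.1 → σ.SameCycle d d'

/-- The dart-reversal involution as a permutation. -/
def dartFlip {V : Type*} (G : SimpleGraph V) : Equiv.Perm G.Dart :=
  ⟨SimpleGraph.Dart.symm, SimpleGraph.Dart.symm,
    fun d => SimpleGraph.Dart.symm_symm d, fun d => SimpleGraph.Dart.symm_symm d⟩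

/-- Number of faces of the embedding given by a rotation system: the number of
orbits of the face permutation `σ ∘ α`. -/
noncomputable def numFaces {V : Type*} (G : SimpleGraph V) (rs : RotationSystem G) : ℕ :=
  Nat.card (Quotient (Setoid.mk (rs.σ * dartFlip G).SameCycle
    ⟨fun _ => Equiv.Perm.SameCycle.refl _ _, Equiv.Perm.SameCycle.symm,
      Equiv.Perm.SameCycle.trans⟩))

/-- `G` (connected) is embeddable in the orientable surface of genus `g`:
by the Heffter–Edmonds principle, some rotation system has Euler genus at most `g`. -/
def GenusAtMost {V : Type*} (G : SimpleGraph V) (g : ℕ) : Prop :=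
  ∃ rs : RotationSystem G,
    (2 : ℤ) - 2 * g ≤ (Nat.card V : ℤ) - Nat.card G.edgeSet + numFaces G rs

end FOG

open SimpleGraph Walk

namespace OPHam

variable {V : Type} {G : SimpleGraph V}

lemma reachable_induce_of_walk {S : Set V} {a b : V} (p : G.Walk a b)
    (hp : ∀ x ∈ p.support, x ∈ S) (ha : a ∈ S) (hb : b ∈ S) :
    (G.induce S).Reachable ⟨a, ha⟩ ⟨b, hb⟩ := by
  induction p with
  | nil => exact Reachable.refl _
  | @cons a c b h q ih =>
    have hc : c ∈ S := hp c (by simp)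
    have hadj : (G.induce S).Adj ⟨a, ha⟩ ⟨c, hc⟩ := h
    exact hadj.reachable.trans (ih (fun x hx => hp x (by simp [hx])) hc hb)

lemma connected_induce_of_spanning_walk {S : Set V} {a b : V} (p : G.Walk a b)
    (hsub : ∀ x ∈ p.support, x ∈ S) (hcov : ∀ x ∈ S, x ∈ p.support) :
    (G.induce S).Connected := by
  classical
  have ha : a ∈ S := hsub a p.start_mem_support
  have : Nonempty S := ⟨⟨a, ha⟩⟩
  refine Connected.mk fun u w => ?_
  have key : ∀ z : S, (G.induce S).Reachable ⟨a, ha⟩ z := by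
    rintro ⟨z, hz⟩
    have hzp : z ∈ p.support := hcov z hz
    exact reachable_induce_of_walk (p.takeUntil z hzp)
      (fun x hx => hsub x (p.support_takeUntil_subset hzp hx)) ha hz
  exact (key u).symm.trans (key w)

lemma connected_induce_support {a b : V} (p : G.Walk a b) :
    (G.induce {v | v ∈ p.support}).Connected :=
  connected_induce_of_spanning_walk p (fun _ hx => hx) (fun _ hx => hx)

lemma connected_induce_singleton (x : V) : (G.induce {x}).Connected := by
  have : Nonempty ({x} : Set V) := ⟨⟨x, rfl⟩⟩
  refine Connected.mk fun u w => ?_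
  have : u = w := Subsingleton.elim u w
  rw [this]

lemma exists_boundary {S : Set V} : ∀ {a b : V} (_ : G.Walk a b), a ∉ S → b ∈ S →
    ∃ u x, u ∉ S ∧ x ∈ S ∧ G.Adj u x := by
  intro a b p
  induction p with
  | nil => intro h h'; exact absurd h' h
  | @cons a c b h q ih =>
    intro ha hb
    by_cases hc : c ∈ S
    · exact ⟨a, c, ha, hc, h⟩
    · exact ih hc hb

lemma exists_prefix_to_set {S : Set V} : ∀ {a b : V} (p : G.Walk a b), p.IsPath → a ∉ S → b ∈ S →
    ∃ (y : V) (_ : y ∈ S) (q : G.Walk a y), q.IsPath ∧ (∀ w ∈ q.support, w ∈ p.support) ∧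
      ∀ w ∈ q.support, w ≠ y → w ∉ S := by
  intro a b p
  induction p with
  | nil => intro _ h h'; exact absurd h' h
  | @cons a c b h q ih =>
    intro hp ha hb
    by_cases hc : c ∈ S
    · refine ⟨c, hc, Walk.cons h Walk.nil, ?_, ?_, ?_⟩
      · have hac : a ≠ c := fun hac => ha (hac ▸ hc)
        simp [Walk.isPath_def, hac]
      · intro w hw; simp at hw; rcases hw with rfl | rfl <;> simp
      · intro w hw hwc; simp at hw; rcases hw with rfl | rfl
        · exact ha
        · exact absurd rfl hwc
    · obtain ⟨y, hy, q', hq', hsub, hint⟩ := ih (hp.of_cons) hc hb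
      have haq : a ∉ q'.support := fun hx =>
        ((Walk.cons_isPath_iff h q).mp hp).2 (hsub a hx)
      refine ⟨y, hy, Walk.cons h q', (Walk.cons_isPath_iff h q').mpr ⟨hq', haq⟩, ?_, ?_⟩
      · intro w hw
        rcases List.mem_cons.mp hw with rfl | hw
        · simp
        · simp [hsub w hw]
      · intro w hw hwy
        rcases List.mem_cons.mp hw with rfl | hw
        · exact ha
        · exact hint w hw hwy

end OPHam

namespace OPHam

variable {V : Type} {G : SimpleGraph V}

lemma exists_third [Fintype V] (hn : 3 ≤ Fintype.card V) (v a : V) :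
    ∃ w, w ≠ v ∧ w ≠ a := by
  classical
  by_contra h
  push_neg at h
  have hsub : (Finset.univ : Finset V) ⊆ {v, a} := fun w _ => by
    by_cases hw : w = v
    · simp [hw]
    · simp [h w hw]
  have hcard := Finset.card_le_card hsub
  have : ({v, a} : Finset V).card ≤ 2 := Finset.card_insert_le _ _ |>.trans (by simp)
  rw [Finset.card_univ] at hcard
  omega

lemma exists_path_in_set {S : Set V} {a b : V} (ha : a ∈ S) (hb : b ∈ S)
    (h : (G.induce S).Reachable ⟨a, ha⟩ ⟨b, hb⟩) :
    ∃ q : G.Walk a b, q.IsPath ∧ ∀ x ∈ q.support, x ∈ S := by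
  classical
  obtain ⟨q0⟩ := h
  let q1 := q0.toPath
  refine ⟨(Walk.map (SimpleGraph.Embedding.induce S).toHom
    (q1 : (G.induce S).Walk ⟨a, ha⟩ ⟨b, hb⟩)).copy rfl rfl, ?_, ?_⟩
  · refine (Walk.isPath_copy _ _ _).mpr ?_
    exact Walk.map_isPath_of_injective Subtype.val_injective q1.2
  · intro x hx
    change x ∈ (Walk.map (SimpleGraph.Embedding.induce S).toHom
      (q1 : (G.induce S).Walk ⟨a, ha⟩ ⟨b, hb⟩)).support at hx
    rw [Walk.support_map] at hx
    obtain ⟨⟨y, hy⟩, _, rfl⟩ := List.mem_map.mp hx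
    exact hy

lemma two_neighbors [Fintype V] (hconn : G.Connected)
    (hdel : ∀ v : V, (G.induce ({v}ᶜ : Set V)).Connected)
    (hn : 3 ≤ Fintype.card V) (v : V) : ∃ a b, a ≠ b ∧ G.Adj v a ∧ G.Adj v b := by
  obtain ⟨u, hu⟩ := Fintype.exists_ne_of_one_lt_card (by omega) v
  obtain ⟨p⟩ := hconn.preconnected v u
  have hnp : ¬ p.Nil := Walk.not_nil_of_ne (Ne.symm hu)
  have ha : G.Adj v (p.getVert 1) := p.adj_snd hnp
  set a := p.getVert 1 with hadef
  by_cases hb : ∃ b, G.Adj v b ∧ b ≠ a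
  · obtain ⟨b, hb1, hb2⟩ := hb
    exact ⟨a, b, Ne.symm hb2, ha, hb1⟩
  · push_neg at hb
    obtain ⟨w, hwv, hwa⟩ := exists_third hn v a
    have hva : v ∈ ({a}ᶜ : Set V) := by simp [ha.ne]
    have hwa' : w ∈ ({a}ᶜ : Set V) := by simp [hwa]
    obtain ⟨q⟩ := (hdel a).preconnected ⟨v, hva⟩ ⟨w, hwa'⟩
    have hq : ¬ q.Nil := Walk.not_nil_of_ne (by simp [Subtype.ext_iff, Ne.symm hwv])
    have hadj := q.adj_snd hq
    have h2 : ((q.getVert 1) : V) = a := hb _ hadj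
    exact absurd h2 (q.getVert 1).2

lemma exists_cycle [Fintype V] (hconn : G.Connected)
    (hdel : ∀ v : V, (G.induce ({v}ᶜ : Set V)).Connected)
    (hn : 3 ≤ Fintype.card V) : ∃ (x : V) (c : G.Walk x x), c.IsCycle := by
  classical
  have hne : Nonempty V := Fintype.card_pos_iff.mp (by omega)
  obtain ⟨v⟩ := hne
  obtain ⟨a, b, hab, hva, hvb⟩ := two_neighbors hconn hdel hn v
  have haS : a ∈ ({v}ᶜ : Set V) := by simp [hva.ne']
  have hbS : b ∈ ({v}ᶜ : Set V) := by simp [hvb.ne']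
  obtain ⟨q2, hq2path, hq2S⟩ := exists_path_in_set haS hbS
    ((hdel v).preconnected ⟨a, haS⟩ ⟨b, hbS⟩)
  have hq2supp : ∀ x ∈ q2.support, x ≠ v := by
    intro x hx
    simpa using hq2S x hx
  have hvq2 : v ∉ q2.support := fun h => hq2supp v h rfl
  have hpath : (q2.concat hvb.symm).IsPath := by
    rw [Walk.isPath_def, Walk.support_concat]
    rw [← List.concat_eq_append]
    exact List.Nodup.concat hvq2 hq2path.support_nodup
  refine ⟨v, Walk.cons hva (q2.concat hvb.symm), ?_⟩
  rw [Walk.cons_isCycle_iff]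
  refine ⟨hpath, ?_⟩
  rw [Walk.edges_concat]
  intro hmem
  rw [List.concat_eq_append] at hmem
  rcases List.mem_append.mp hmem with hmem | hmem
  · exact hvq2 (q2.fst_mem_support_of_mem_edges hmem)
  · simp only [List.mem_singleton, Sym2.eq_iff] at hmem
    rcases hmem with ⟨rfl, rfl⟩ | ⟨-, rfl⟩
    · exact hva.ne rfl
    · exact hab rfl

end OPHam

namespace OPHam

variable {V : Type} {G : SimpleGraph V}

lemma end_mem_support_tail : ∀ {a b : V} (r : G.Walk a b), ¬ r.Nil → b ∈ r.support.tail := by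
  intro a b r
  induction r with
  | nil => intro h; exact absurd Walk.Nil.nil h
  | cons h q ih => intro _; simpa using q.end_mem_support

lemma mem_support_rotate_iff [DecidableEq V] {a x w : V} (p : G.Walk a a) (hx : x ∈ p.support) :
    w ∈ (p.rotate x hx).support ↔ w ∈ p.support := by
  have hrot : p.rotate x hx = (p.dropUntil x hx).append (p.takeUntil x hx) := rfl
  rw [hrot, Walk.mem_support_append_iff]
  conv_rhs => rw [← p.take_spec hx, Walk.mem_support_append_iff]
  tauto

lemma length_rotate' [DecidableEq V] {a x : V} (p : G.Walk a a) (hx : x ∈ p.support) :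
    (p.rotate x hx).length = p.length := by
  have h1 : (p.takeUntil x hx).length + (p.dropUntil x hx).length = p.length := by
    rw [← Walk.length_append, p.take_spec hx]
  have hrot : p.rotate x hx = (p.dropUntil x hx).append (p.takeUntil x hx) := rfl
  rw [hrot, Walk.length_append]
  omega

lemma ham_two_connected {a : V} {p : G.Walk a a} (hc : p.IsCycle)
    (hall : ∀ v : V, v ∈ p.support) :
    G.Connected ∧ ∀ v : V, (G.induce ({v}ᶜ : Set V)).Connected := by
  classical
  have hne : Nonempty V := ⟨a⟩
  constructor
  · refine Connected.mk fun u w => ?_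
    exact ⟨(p.takeUntil u (hall u)).reverse.append (p.takeUntil w (hall w))⟩
  · intro v
    set q := p.rotate v (hall v) with hqdef
    have hqc : q.IsCycle := hc.rotate (hall v)
    have hqnil : ¬ q.Nil := hqc.not_nil
    obtain ⟨u', h', r, hq⟩ := Walk.not_nil_iff.mp hqnil
    have hrsupp : q.support.tail = r.support := by rw [hq, Walk.support_cons]; rfl
    have hrnodup : r.support.Nodup := hrsupp ▸ hqc.2
    have hrlen : 2 ≤ r.length := by
      have := hqc.three_le_length
      rw [hq, Walk.length_cons] at this
      omega
    have hrnil : ¬ r.Nil := by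
      rw [Walk.nil_iff_length_eq]; omega
    have hrevnil : ¬ r.reverse.Nil := by
      rw [Walk.nil_iff_length_eq, Walk.length_reverse]; omega
    obtain ⟨w', h'', s, hs⟩ := Walk.not_nil_iff.mp hrevnil
    have hssupp : r.support.reverse = v :: s.support := by
      rw [← Walk.support_reverse, hs, Walk.support_cons]
    have hvs : v ∉ s.support := by
      have : r.support.reverse.Nodup := List.nodup_reverse.mpr hrnodup
      rw [hssupp] at this
      exact (List.nodup_cons.mp this).1
    have hcov : ∀ x : V, x ≠ v → x ∈ s.support := by
      intro x hxv
      have hxq : x ∈ q.support := (mem_support_rotate_iff p (hall v)).mpr (hall x)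
      have hxr : x ∈ r.support := by
        rw [hq, Walk.support_cons] at hxq
        exact (List.mem_cons.mp hxq).resolve_left hxv
      have : x ∈ r.support.reverse := List.mem_reverse.mpr hxr
      rw [hssupp] at this
      exact (List.mem_cons.mp this).resolve_left hxv
    exact connected_induce_of_spanning_walk s
      (fun x hx => by simpa using fun hxv : x = v => hvs (hxv ▸ hx))
      (fun x hx => hcov x (by simpa using hx))

end OPHam

namespace OPHam

variable {V : Type} {G : SimpleGraph V}

lemma forward [Fintype V] (hconn : G.Connected)
    (hdel : ∀ v : V, (G.induce ({v}ᶜ : Set V)).Connected)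
    (hn : 3 ≤ Fintype.card V)
    (hK23 : ∀ B : Fin 2 ⊕ Fin 3 → Set V,
      ¬ ((∀ w, (B w).Nonempty) ∧
        (∀ w, (G.induce (B w)).Connected) ∧
        (Pairwise fun w₁ w₂ => Disjoint (B w₁) (B w₂)) ∧
        (∀ w₁ w₂, (completeBipartiteGraph (Fin 2) (Fin 3)).Adj w₁ w₂ →
          ∃ u ∈ B w₁, ∃ v ∈ B w₂, G.Adj u v))) :
    ∃ (a : V) (p : G.Walk a a), p.IsCycle ∧ ∀ v : V, v ∈ p.support := by
  classical
  set M := {n : ℕ | ∃ (x : V) (c : G.Walk x x), c.IsCycle ∧ c.length = n} with hM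
  have hMne : M.Nonempty := by
    obtain ⟨x, c, hc⟩ := exists_cycle hconn hdel hn
    exact ⟨c.length, x, c, hc, rfl⟩
  have hMbdd : BddAbove M := by
    refine ⟨Fintype.card V, ?_⟩
    rintro n ⟨x, c, hc, rfl⟩
    have h1 : c.support.tail.Nodup := hc.2
    have h2 := h1.length_le_card
    have h3 : c.support.length = c.length + 1 := c.length_support
    have h4 : c.support.tail.length = c.length := by
      rw [List.length_tail, h3]; omega
    omega
  obtain ⟨x0, p, hp, hplen⟩ := Nat.sSup_mem hMne hMbdd
  by_cases hall : ∀ v : V, v ∈ p.support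
  · exact ⟨x0, p, hp, hall⟩
  exfalso
  push_neg at hall
  obtain ⟨v0, hv0⟩ := hall
  obtain ⟨u, x, hu, hx, hux⟩ := exists_boundary (S := {w | w ∈ p.support})
      ((hconn.preconnected v0 x0).some) hv0 p.start_mem_support
  -- rotate the cycle to start at x
  set c := p.rotate x hx with hcdef
  have hcyc : c.IsCycle := hp.rotate hx
  have hclen : c.length = p.length := length_rotate' p hx
  obtain ⟨m, hxm, r, hceq⟩ := Walk.not_nil_iff.mp hcyc.not_nil
  have hrsupp_tail : c.support.tail = r.support := by rw [hceq, Walk.support_cons]; rfl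
  have hrnodup : r.support.Nodup := hrsupp_tail ▸ hcyc.2
  have hrpath : r.IsPath := (Walk.isPath_def r).mpr hrnodup
  have hrlen : 2 ≤ r.length := by
    have := hcyc.three_le_length
    rw [hceq, Walk.length_cons] at this
    omega
  have hmemr : ∀ w, w ∈ p.support ↔ w ∈ r.support := by
    intro w
    rw [← mem_support_rotate_iff p hx (w := w), ← hcdef, hceq, Walk.support_cons, List.mem_cons]
    constructor
    · rintro (rfl | h)
      · exact r.end_mem_support
      · exact h
    · exact Or.inr
  have hur : u ∉ r.support := fun h => hu ((hmemr u).mpr h)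
  have hrnil : ¬ r.Nil := by rw [Walk.nil_iff_length_eq]; omega
  have hxtail : x ∈ r.support.tail := end_mem_support_tail r hrnil
  have hmx : m ≠ x := by
    intro h
    have hm : m ∉ r.support.tail := by
      have h2 := hrnodup
      rw [r.support_eq_cons] at h2
      exact (List.nodup_cons.mp h2).1
    exact hm (h ▸ hxtail)
  -- path from u to m avoiding x
  have hunex : u ≠ x := fun h => hu (h ▸ hx)
  have huS : u ∈ ({x}ᶜ : Set V) := by simp [hunex]
  have hmS : m ∈ ({x}ᶜ : Set V) := by simp [hmx]
  obtain ⟨Q, hQpath, hQS⟩ := exists_path_in_set huS hmS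
    ((hdel x).preconnected ⟨u, huS⟩ ⟨m, hmS⟩)
  obtain ⟨y, hyr, Q', hQ'path, hQ'sub, hQ'int⟩ :=
    exists_prefix_to_set (S := {w | w ∈ r.support}) Q hQpath hur r.start_mem_support
  have hyr' : y ∈ r.support := hyr
  have hQ'x : ∀ w ∈ Q'.support, w ≠ x := fun w hw => by
    have := hQS w (hQ'sub w hw)
    simpa using this
  have hyx : y ≠ x := hQ'x y Q'.end_mem_support
  have huy : u ≠ y := fun h => hur (h ▸ hyr')
  have hQ'nil : ¬ Q'.Nil := Walk.not_nil_of_ne huy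
  have hQ'len : 1 ≤ Q'.length := by
    have := Walk.not_nil_iff_lt_length.mp hQ'nil
    omega
  -- split r at y
  set T := r.takeUntil y hyr' with hTdef
  set D := r.dropUntil y hyr' with hDdef
  have hspec : T.append D = r := r.take_spec hyr'
  have hsupp_eq : r.support = T.support ++ D.support.tail := by
    rw [← hspec, Walk.support_append]
  have hnd := hrnodup
  rw [hsupp_eq, List.nodup_append'] at hnd
  have hTnodup := hnd.1
  have hDtailnodup := hnd.2.1
  have hdisj := hnd.2.2
  have hyT : y ∈ T.support := T.end_mem_support
  have hyDt : y ∉ D.support.tail := fun h => hdisj hyT h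
  have hDnodup : D.support.Nodup := by
    rw [D.support_eq_cons]
    exact List.nodup_cons.mpr ⟨hyDt, hDtailnodup⟩
  have hDnil : ¬ D.Nil := Walk.not_nil_of_ne hyx
  have hxDt : x ∈ D.support.tail := end_mem_support_tail D hDnil
  have hxT : x ∉ T.support := fun h => hdisj h hxDt
  have hDsub : ∀ w ∈ D.support, w ∈ r.support := fun w hw =>
    r.support_dropUntil_subset hyr' hw
  have hTsub : ∀ w ∈ T.support, w ∈ r.support := fun w hw =>
    r.support_takeUntil_subset hyr' hw
  have hlenTD : T.length + D.length = r.length := by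
    rw [← Walk.length_append, hspec]
  -- first long cycle: x - u - Q' - y - D - x
  have hQ'D_nodup : (Q'.append D).support.Nodup := by
    rw [Walk.support_append, List.nodup_append']
    refine ⟨hQ'path.support_nodup, hDtailnodup, ?_⟩
    intro w hw hw'
    have hwr : w ∈ r.support := hDsub w (List.mem_of_mem_tail hw')
    by_cases hwy : w = y
    · exact hyDt (hwy ▸ hw')
    · exact hQ'int w hw hwy hwr
  have hedge1 : s(x, u) ∉ (Q'.append D).edges := by
    intro h
    rw [Walk.edges_append, List.mem_append] at h
    rcases h with h | h
    · exact hQ'x x ((Q'.fst_mem_support_of_mem_edges) h) rfl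
    · exact hur (hDsub u (D.snd_mem_support_of_mem_edges h))
  have hc1cyc : (Walk.cons hux.symm (Q'.append D)).IsCycle := by
    rw [Walk.cons_isCycle_iff]
    exact ⟨(Walk.isPath_def _).mpr hQ'D_nodup, hedge1⟩
  have hc1le : (Walk.cons hux.symm (Q'.append D)).length ≤ p.length := by
    have hmem : (Walk.cons hux.symm (Q'.append D)).length ∈ M := ⟨x, _, hc1cyc, rfl⟩
    have := le_csSup hMbdd hmem
    omega
  -- second long cycle: x - u - Q' - y - (reverse of x::T) - x
  set R := (Walk.cons hxm T).reverse with hRdef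
  have hRsupp : R.support = (x :: T.support).reverse := by
    rw [hRdef, Walk.support_reverse, Walk.support_cons]
  have hxTnodup : (x :: T.support).Nodup := List.nodup_cons.mpr ⟨hxT, hTnodup⟩
  have hRnodup : R.support.Nodup := by
    rw [hRsupp]; exact List.nodup_reverse.mpr hxTnodup
  have hyRt : y ∉ R.support.tail := by
    have h2 := hRnodup
    rw [R.support_eq_cons] at h2
    exact (List.nodup_cons.mp h2).1
  have hRtail_nodup : R.support.tail.Nodup := by
    have h2 := hRnodup
    rw [R.support_eq_cons] at h2
    exact (List.nodup_cons.mp h2).2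
  have hRmem : ∀ w, w ∈ R.support → w = x ∨ w ∈ T.support := by
    intro w hw
    rw [hRsupp, List.mem_reverse, List.mem_cons] at hw
    exact hw
  have hQ'R_nodup : (Q'.append R).support.Nodup := by
    rw [Walk.support_append, List.nodup_append']
    refine ⟨hQ'path.support_nodup, hRtail_nodup, ?_⟩
    intro w hw hw'
    rcases hRmem w (List.mem_of_mem_tail hw') with rfl | hwT
    · exact hQ'x w hw rfl
    · have hwr : w ∈ r.support := hTsub w hwT
      by_cases hwy : w = y
      · exact hyRt (hwy ▸ hw')
      · exact hQ'int w hw hwy hwr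
  have hedge2 : s(x, u) ∉ (Q'.append R).edges := by
    intro h
    rw [Walk.edges_append, List.mem_append] at h
    rcases h with h | h
    · exact hQ'x x ((Q'.fst_mem_support_of_mem_edges) h) rfl
    · have hu' : u ∈ R.support := R.snd_mem_support_of_mem_edges h
      rcases hRmem u hu' with rfl | hT'
      · exact hunex rfl
      · exact hur (hTsub u hT')
  have hc2cyc : (Walk.cons hux.symm (Q'.append R)).IsCycle := by
    rw [Walk.cons_isCycle_iff]
    exact ⟨(Walk.isPath_def _).mpr hQ'R_nodup, hedge2⟩
  have hc2le : (Walk.cons hux.symm (Q'.append R)).length ≤ p.length := by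
    have hmem : (Walk.cons hux.symm (Q'.append R)).length ∈ M := ⟨x, _, hc2cyc, rfl⟩
    have := le_csSup hMbdd hmem
    omega
  have hRlen : R.length = T.length + 1 := by
    rw [hRdef, Walk.length_reverse, Walk.length_cons]
  have hplen2 : p.length = 1 + T.length + D.length := by
    rw [← hclen, hceq, Walk.length_cons]
    omega
  have hlen1 : (Walk.cons hux.symm (Q'.append D)).length = 1 + Q'.length + D.length := by
    rw [Walk.length_cons, Walk.length_append]; omega
  have hlen2 : (Walk.cons hux.symm (Q'.append R)).length = 2 + Q'.length + T.length := by
    rw [Walk.length_cons, Walk.length_append]; omega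
  have hTlen : 1 ≤ T.length := by omega
  have hDlen : 2 ≤ D.length := by omega
  -- decompose T, D, Q' to get the interiors
  have hTrevnil : ¬ T.reverse.Nil := by
    rw [Walk.nil_iff_length_eq, Walk.length_reverse]; omega
  obtain ⟨t2, hyt2, T2, hT2eq⟩ := Walk.not_nil_iff.mp hTrevnil
  have hTrev : T.support.reverse = y :: T2.support := by
    rw [← Walk.support_reverse, hT2eq, Walk.support_cons]
  have hyT2 : y ∉ T2.support := by
    have h2 := List.nodup_reverse.mpr hTnodup
    rw [hTrev] at h2
    exact (List.nodup_cons.mp h2).1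
  have hT2subT : ∀ w ∈ T2.support, w ∈ T.support := by
    intro w hw
    have : w ∈ T.support.reverse := by
      rw [hTrev]; exact List.mem_cons_of_mem _ hw
    exact List.mem_reverse.mp this
  have hxT2 : x ∉ T2.support := fun h => hxT (hT2subT x h)
  -- D = cons (Adj y d) D1
  obtain ⟨d, hyd, D1, hD1eq⟩ := Walk.not_nil_iff.mp hDnil
  have hD1supp : D.support.tail = D1.support := by rw [hD1eq, Walk.support_cons]; rfl
  have hD1len : D.length = D1.length + 1 := by rw [hD1eq, Walk.length_cons]
  have hD1revnil : ¬ D1.reverse.Nil := by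
    rw [Walk.nil_iff_length_eq, Walk.length_reverse]; omega
  obtain ⟨e, hxe, D2, hD2eq⟩ := Walk.not_nil_iff.mp hD1revnil
  have hD1rev : D1.support.reverse = x :: D2.support := by
    rw [← Walk.support_reverse, hD2eq, Walk.support_cons]
  have hD1nodup : D1.support.Nodup := hD1supp ▸ hDtailnodup
  have hxD2 : x ∉ D2.support := by
    have h2 := List.nodup_reverse.mpr hD1nodup
    rw [hD1rev] at h2
    exact (List.nodup_cons.mp h2).1
  have hD2subD1 : ∀ w ∈ D2.support, w ∈ D1.support := by
    intro w hw
    have : w ∈ D1.support.reverse := by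
      rw [hD1rev]; exact List.mem_cons_of_mem _ hw
    exact List.mem_reverse.mp this
  have hD2subDt : ∀ w ∈ D2.support, w ∈ D.support.tail := by
    intro w hw
    rw [hD1supp]
    exact hD2subD1 w hw
  have hD2subr : ∀ w ∈ D2.support, w ∈ r.support := fun w hw =>
    hDsub w (List.mem_of_mem_tail (hD2subDt w hw))
  have hyD2 : y ∉ D2.support := fun h => hyDt (hD2subDt y h)
  have hdD2 : d ∈ D2.support := D2.end_mem_support
  -- Q'.reverse = cons (Adj y q5) Q2
  have hQ'revnil : ¬ Q'.reverse.Nil := by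
    rw [Walk.nil_iff_length_eq, Walk.length_reverse]; omega
  obtain ⟨q5, hyq5, Q2, hQ2eq⟩ := Walk.not_nil_iff.mp hQ'revnil
  have hQ'rev : Q'.support.reverse = y :: Q2.support := by
    rw [← Walk.support_reverse, hQ2eq, Walk.support_cons]
  have hyQ2 : y ∉ Q2.support := by
    have h2 := List.nodup_reverse.mpr hQ'path.support_nodup
    rw [hQ'rev] at h2
    exact (List.nodup_cons.mp h2).1
  have hQ2subQ' : ∀ w ∈ Q2.support, w ∈ Q'.support := by
    intro w hw
    have : w ∈ Q'.support.reverse := by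
      rw [hQ'rev]; exact List.mem_cons_of_mem _ hw
    exact List.mem_reverse.mp this
  have huQ2 : u ∈ Q2.support := Q2.end_mem_support
  have hQ2r : ∀ w ∈ Q2.support, w ∉ r.support := fun w hw =>
    hQ'int w (hQ2subQ' w hw) (fun h => hyQ2 (h ▸ hw))
  have hxQ2 : x ∉ Q2.support := fun h => hQ'x x (hQ2subQ' x h) rfl
  -- build the K₂,₃ minor
  apply hK23 (fun w => match w with
    | .inl ⟨0, _⟩ => {x}
    | .inl ⟨1, _⟩ => {y}
    | .inr ⟨0, _⟩ => {z | z ∈ T2.support}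
    | .inr ⟨1, _⟩ => {z | z ∈ D2.support}
    | .inr ⟨2, _⟩ => {z | z ∈ Q2.support})
  refine ⟨?_, ?_, ?_, ?_⟩
  · rintro (i | j)
    · fin_cases i
      · exact ⟨x, rfl⟩
      · exact ⟨y, rfl⟩
    · fin_cases j
      · exact ⟨t2, T2.start_mem_support⟩
      · exact ⟨e, D2.start_mem_support⟩
      · exact ⟨q5, Q2.start_mem_support⟩
  · rintro (i | j)
    · fin_cases i
      · exact connected_induce_singleton x
      · exact connected_induce_singleton y
    · fin_cases j
      · exact connected_induce_support T2
      · exact connected_induce_support D2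
      · exact connected_induce_support Q2
  · have dxy : Disjoint ({x} : Set V) {y} := by
      simp [Set.disjoint_singleton, Ne.symm hyx]
    have dxT2 : Disjoint ({x} : Set V) {z | z ∈ T2.support} :=
      Set.disjoint_left.mpr (by rintro a rfl; exact hxT2)
    have dxD2 : Disjoint ({x} : Set V) {z | z ∈ D2.support} :=
      Set.disjoint_left.mpr (by rintro a rfl; exact hxD2)
    have dxQ2 : Disjoint ({x} : Set V) {z | z ∈ Q2.support} :=
      Set.disjoint_left.mpr (by rintro a rfl; exact hxQ2)
    have dyT2 : Disjoint ({y} : Set V) {z | z ∈ T2.support} :=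
      Set.disjoint_left.mpr (by rintro a rfl; exact hyT2)
    have dyD2 : Disjoint ({y} : Set V) {z | z ∈ D2.support} :=
      Set.disjoint_left.mpr (by rintro a rfl; exact hyD2)
    have dyQ2 : Disjoint ({y} : Set V) {z | z ∈ Q2.support} :=
      Set.disjoint_left.mpr (by rintro a rfl; exact hyQ2)
    have dT2D2 : Disjoint ({z | z ∈ T2.support} : Set V) {z | z ∈ D2.support} :=
      Set.disjoint_left.mpr (fun {a} ha ha' =>
        hdisj (hT2subT a ha) (hD2subDt a ha'))
    have dT2Q2 : Disjoint ({z | z ∈ T2.support} : Set V) {z | z ∈ Q2.support} :=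
      Set.disjoint_left.mpr (fun {a} ha ha' =>
        hQ2r a ha' (hTsub a (hT2subT a ha)))
    have dD2Q2 : Disjoint ({z | z ∈ D2.support} : Set V) {z | z ∈ Q2.support} :=
      Set.disjoint_left.mpr (fun {a} ha ha' =>
        hQ2r a ha' (hD2subr a ha))
    rintro (i | j) (i' | j') hne
    · fin_cases i <;> fin_cases i'
      · exact absurd rfl hne
      · exact dxy
      · exact dxy.symm
      · exact absurd rfl hne
    · fin_cases i <;> fin_cases j'
      · exact dxT2
      · exact dxD2
      · exact dxQ2
      · exact dyT2
      · exact dyD2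
      · exact dyQ2
    · fin_cases j <;> fin_cases i'
      · exact dxT2.symm
      · exact dyT2.symm
      · exact dxD2.symm
      · exact dyD2.symm
      · exact dxQ2.symm
      · exact dyQ2.symm
    · fin_cases j <;> fin_cases j'
      · exact absurd rfl hne
      · exact dT2D2
      · exact dT2Q2
      · exact dT2D2.symm
      · exact absurd rfl hne
      · exact dD2Q2
      · exact dT2Q2.symm
      · exact dD2Q2.symm
      · exact absurd rfl hne
  · rintro (i | j) (i' | j') hadj
    · simp [completeBipartiteGraph] at hadj
    · fin_cases i <;> fin_cases j'
      · exact ⟨x, rfl, m, T2.end_mem_support, hxm⟩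
      · exact ⟨x, rfl, e, D2.start_mem_support, hxe⟩
      · exact ⟨x, rfl, u, huQ2, hux.symm⟩
      · exact ⟨y, rfl, t2, T2.start_mem_support, hyt2⟩
      · exact ⟨y, rfl, d, hdD2, hyd⟩
      · exact ⟨y, rfl, q5, Q2.start_mem_support, hyq5⟩
    · fin_cases j <;> fin_cases i'
      · exact ⟨m, T2.end_mem_support, x, rfl, hxm.symm⟩
      · exact ⟨t2, T2.start_mem_support, y, rfl, hyt2.symm⟩
      · exact ⟨e, D2.start_mem_support, x, rfl, hxe.symm⟩
      · exact ⟨d, hdD2, y, rfl, hyd.symm⟩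
      · exact ⟨u, huQ2, x, rfl, hux⟩
      · exact ⟨q5, Q2.start_mem_support, y, rfl, hyq5.symm⟩
    · simp [completeBipartiteGraph] at hadj

end OPHam


/-- An outerplanar graph on at least 3 vertices is 2-connected
(connected and still connected after removing any single vertex) if and only if
it is Hamiltonian. -/
theorem outerplanar_two_connected_iff_hamiltonian (V : Type) [Fintype V]
    (G : SimpleGraph V) (hn : 3 ≤ Fintype.card V) (houter : FOG.Outerplanar G) :
    (G.Connected ∧ ∀ v : V, (G.induce ({v}ᶜ : Set V)).Connected) ↔ FOG.IsHam G := by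
  constructor
  · rintro ⟨hconn, hdel⟩
    exact OPHam.forward hconn hdel hn
      (fun B hB => houter.2 ⟨B, hB.1, hB.2.1, hB.2.2.1, hB.2.2.2⟩)
  · rintro ⟨a, p, hp, hall⟩
    exact OPHam.ham_two_connected hp hall
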